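/- Let H be a model graph with an isolated vertex P (a vertex of H incident to no full or dotted edge), and let G be a simple undirected graph. Then G admits an H-partition if and only if G contains four distinct vertices (x_A, x_B, x_C, x_D) that are H-isomorphic, i.e., such that for each full edge (p,q) of H, x_p is adjacent to x_q, and for each dotted edge (p,q) of H, x_p is nonadjacent to x_q. -/

import Mathlib

inductive Label : Type
  | A | B | C | D
deriving DecidableEq

instance instFintypeLabel : Fintype Label where
  elems := {Label.A, Label.B, Label.C, Label.D}
  complete := by intro x; cases x <;> simp

/-- A model graph: an undirected graph on the four labels A,B,C,D, each edge
marked full or dotted (never both), symmetric and irreflexive. -/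
structure ModelGraph : Type where
  full : Label → Label → Bool
  dotted : Label → Label → Bool
  full_symm : ∀ p q, full p q = full q p
  dotted_symm : ∀ p q, dotted p q = dotted q p
  full_irrefl : ∀ p, full p p = false
  dotted_irrefl : ∀ p, dotted p p = false
  not_both : ∀ p q, ¬ (full p q = true ∧ dotted p q = true)

/-- `ℓ` is an `H`-partition of `G`: all four classes nonempty, full edges of `H`
force complete adjacency, dotted edges force complete nonadjacency. -/
def IsHPartition {V : Type} (G : SimpleGraph V) (H : ModelGraph) (ℓ : V → Label) : Prop :=
  (∀ p : Label, ∃ v, ℓ v = p) ∧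
  (∀ u v, H.full (ℓ u) (ℓ v) = true → G.Adj u v) ∧
  (∀ u v, H.dotted (ℓ u) (ℓ v) = true → ¬ G.Adj u v)

/-- Label `p` is possible for vertex `v` relative to the partial labeling `pl`. -/
def Possible {V : Type} (G : SimpleGraph V) (H : ModelGraph)
    (pl : V → Option Label) (v : V) (p : Label) : Prop :=
  (∀ q y, H.full p q = true → pl y = some q → G.Adj v y) ∧
  (∀ q y, H.dotted p q = true → pl y = some q → ¬ G.Adj v y)

/-- Full-edge neighborhood of a set of labels. -/
def NFull (H : ModelGraph) (L : Finset Label) : Finset Label :=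
  Finset.univ.filter (fun q => ∃ p ∈ L, H.full p q = true)

/-- Dotted-edge neighborhood of a set of labels. -/
def NDotted (H : ModelGraph) (L : Finset Label) : Finset Label :=
  Finset.univ.filter (fun q => ∃ p ∈ L, H.dotted p q = true)

/-- Class sizes `a,b,c,d` as a function of the label. -/
def cnt (a b c d : ℕ) : Label → ℕ
  | .A => a | .B => b | .C => c | .D => d

/-- for a model graph with an isolated vertex P, G admits an
H-partition iff G contains an H-isomorphic quadruplet of distinct vertices. -/
theorem stmt_2 (H : ModelGraph) (P : Label)
    (hiso : ∀ q : Label, H.full P q = false ∧ H.dotted P q = false)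
    {V : Type} (G : SimpleGraph V) :
    (∃ ℓ : V → Label, IsHPartition G H ℓ) ↔
      ∃ x : Label → V, Function.Injective x ∧
        (∀ p q : Label, H.full p q = true → G.Adj (x p) (x q)) ∧
        (∀ p q : Label, H.dotted p q = true → ¬ G.Adj (x p) (x q)) := by
  classical
  constructor
  · rintro ⟨ℓ, hne, hfull, hdot⟩
    choose x hx using hne
    refine ⟨x, ?_, ?_, ?_⟩
    · intro p q h
      rw [← hx p, ← hx q, h]
    · intro p q h
      exact hfull _ _ (by rw [hx, hx]; exact h)
    · intro p q h
      exact hdot _ _ (by rw [hx, hx]; exact h)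
  · rintro ⟨x, hinj, hfull, hdot⟩
    set ℓ : V → Label := fun v => if h : ∃ q, x q = v ∧ q ≠ P then h.choose else P
      with hℓ
    have key : ∀ v, ℓ v ≠ P → x (ℓ v) = v := by
      intro v hv
      by_cases h : ∃ q, x q = v ∧ q ≠ P
      · simp only [hℓ, dif_pos h]
        exact h.choose_spec.1
      · exact absurd (by simp [hℓ, dif_neg h]) hv
    refine ⟨ℓ, ?_, ?_, ?_⟩
    · intro p
      by_cases hp : p = P
      · refine ⟨x P, ?_⟩
        have h : ¬ ∃ q, x q = x P ∧ q ≠ P := by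
          rintro ⟨q, hq, hq'⟩; exact hq' (hinj hq)
        rw [hp]
        simp [hℓ, dif_neg h]
      · refine ⟨x p, ?_⟩
        have h : ∃ q, x q = x p ∧ q ≠ P := ⟨p, rfl, hp⟩
        simp only [hℓ, dif_pos h]
        exact hinj h.choose_spec.1
    · intro u v hf
      by_cases hu : ℓ u = P
      · rw [hu, (hiso (ℓ v)).1] at hf; exact absurd hf (by simp)
      by_cases hv : ℓ v = P
      · rw [hv, H.full_symm, (hiso (ℓ u)).1] at hf; exact absurd hf (by simp)
      have := hfull _ _ hf
      rwa [key u hu, key v hv] at this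
    · intro u v hf
      by_cases hu : ℓ u = P
      · rw [hu, (hiso (ℓ v)).2] at hf; exact absurd hf (by simp)
      by_cases hv : ℓ v = P
      · rw [hv, H.dotted_symm, (hiso (ℓ u)).2] at hf; exact absurd hf (by simp)
      have := hdot _ _ hf
      rwa [key u hu, key v hv] at this
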